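/- arXiv:2603.17862 — 3 statements merged into one kernel-verified Lean document; each statement's English description precedes it below -/
import Mathlib

section
/- Let λ ∈ ℝⁿ with λ_i > 0 for every agent i, let x ∈ M maximize ∑_i λ_i (u_i · y_i) over y ∈ M, and let i* be an agent maximizing p(λ) · (x_i − ω_i) over all agents i. Set α := max(p(λ) · (x_{i*} − ω_{i*}), 0). Then u_{i*} · x_{i*} = max{u_{i*} · y : y ∈ Δⁿ₋ and p(λ) · y ≤ p(λ) · ω_{i*} + α}; that is, the agent with the greatest excess expenditure receives her favorite affordable bundle. -/
open Finset

/-- Dot product of two vectors in `ℝⁿ`. -/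
def dotp {n : ℕ} (a b : Fin n → ℝ) : ℝ := ∑ j, a j * b j

/-- Membership in `Δⁿ₋`: nonnegative with coordinate sum at most 1. -/
def InSimplexLe {n : ℕ} (y : Fin n → ℝ) : Prop := (∀ j, 0 ≤ y j) ∧ ∑ j, y j ≤ 1

/-- The set `M` of allocations: nonnegative doubly stochastic matrices. -/
def IsAlloc {n : ℕ} (x : Fin n → Fin n → ℝ) : Prop :=
  (∀ i j, 0 ≤ x i j) ∧ (∀ i, ∑ j, x i j = 1) ∧ (∀ j, ∑ i, x i j = 1)

/-- The feasible set for the relaxed welfare problem where the supply of good `l`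
is doubled. -/
def FeasRelax {n : ℕ} (l : Fin n) (x : Fin n → Fin n → ℝ) : Prop :=
  (∀ i j, 0 ≤ x i j) ∧ (∀ i, ∑ j, x i j ≤ 1) ∧
  (∀ j, j ≠ l → ∑ i, x i j ≤ 1) ∧ (∑ i, x i l ≤ 2)

/-- `W(λ)`: the maximum weighted welfare over allocations. -/
noncomputable def Wval {n : ℕ} (u : Fin n → Fin n → ℝ) (lam : Fin n → ℝ) : ℝ :=
  sSup ((fun x => ∑ i, lam i * dotp (u i) (x i)) '' {x | IsAlloc x})

/-- `W_l(λ)`: the maximum weighted welfare when the supply of good `l` is doubled. -/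
noncomputable def Wrelax {n : ℕ} (u : Fin n → Fin n → ℝ) (lam : Fin n → ℝ)
    (l : Fin n) : ℝ :=
  sSup ((fun x => ∑ i, lam i * dotp (u i) (x i)) '' {x | FeasRelax l x})

/-- The VCG price vector `p(λ)`, with `p_l(λ) = W_l(λ) − W(λ)`. -/
noncomputable def vcg {n : ℕ} (u : Fin n → Fin n → ℝ) (lam : Fin n → ℝ) :
    Fin n → ℝ :=
  fun l => Wrelax u lam l - Wval u lam

section GOauxSection
namespace GOaux

variable {n : ℕ}

/-- Weighted value of a (fractional) allocation under weight matrix `A`. -/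
noncomputable def vA (A z : Fin n → Fin n → ℝ) : ℝ := ∑ i, ∑ j, A i j * z i j

/-- Sub-doubly-stochastic matrices. -/
def SubDS (z : Fin n → Fin n → ℝ) : Prop :=
  (∀ i j, 0 ≤ z i j) ∧ (∀ i, ∑ j, z i j ≤ 1) ∧ (∀ j, ∑ i, z i j ≤ 1)

/-- Feasible points for the economy without agent `i0`. -/
def NoI (i0 : Fin n) (z : Fin n → Fin n → ℝ) : Prop := SubDS z ∧ ∀ j, z i0 j = 0

/-- Optimal welfare of the economy without agent `i0`. -/
noncomputable def WnoA (A : Fin n → Fin n → ℝ) (i0 : Fin n) : ℝ :=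
  sSup (vA A '' {z | NoI i0 z})

lemma vA_le_bound {A z : Fin n → Fin n → ℝ} (hA : ∀ i j, 0 ≤ A i j)
    (hz0 : ∀ i j, 0 ≤ z i j) (hz1 : ∀ i, ∑ j, z i j ≤ 1) :
    vA A z ≤ ∑ i, ∑ j, A i j := by
  refine Finset.sum_le_sum fun i _ => Finset.sum_le_sum fun j _ => ?_
  have hle1 : z i j ≤ 1 := by
    have h1 : z i j ≤ ∑ j', z i j' :=
      Finset.single_le_sum (fun j' _ => hz0 i j') (mem_univ j)
    linarith [hz1 i]
  calc A i j * z i j ≤ A i j * 1 := by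
        exact mul_le_mul_of_nonneg_left hle1 (hA i j)
    _ = A i j := mul_one _

/-- Completion lemma: a sub-doubly-stochastic point has value at most the optimum. -/
lemma subDS_le {A x : Fin n → Fin n → ℝ} (hA : ∀ i j, 0 ≤ A i j) (hx : IsAlloc x)
    (hm : ∀ z, IsAlloc z → vA A z ≤ vA A x) {z : Fin n → Fin n → ℝ} (hz : SubDS z) :
    vA A z ≤ vA A x := by
  obtain ⟨hz0, hzr, hzc⟩ := hz
  set r : Fin n → ℝ := fun i => 1 - ∑ j, z i j with hr_def
  set c : Fin n → ℝ := fun j => 1 - ∑ i, z i j with hc_def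
  have hr0 : ∀ i, 0 ≤ r i := fun i => by simp [hr_def]; linarith [hzr i]
  have hc0 : ∀ j, 0 ≤ c j := fun j => by simp [hc_def]; linarith [hzc j]
  set T : ℝ := ∑ i, r i with hT_def
  have hTc : ∑ j, c j = T := by
    simp only [hT_def, hr_def, hc_def, Finset.sum_sub_distrib]
    rw [Finset.sum_comm]
  have hT0 : 0 ≤ T := Finset.sum_nonneg fun i _ => hr0 i
  rcases eq_or_lt_of_le hT0 with hT | hT
  · -- T = 0 : z is already an allocation
    have hre : ∀ i ∈ Finset.univ, r i = 0 :=
      (Finset.sum_eq_zero_iff_of_nonneg (fun i _ => hr0 i)).1 hT.symm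
    have hce : ∀ j ∈ Finset.univ, c j = 0 := by
      refine (Finset.sum_eq_zero_iff_of_nonneg (fun j _ => hc0 j)).1 ?_
      rw [hTc]; exact hT.symm
    refine hm z ⟨hz0, fun i => ?_, fun j => ?_⟩
    · have := hre i (mem_univ i); simp [hr_def] at this; linarith
    · have := hce j (mem_univ j); simp [hc_def] at this; linarith
  · -- T > 0 : complete z to an allocation
    set z' : Fin n → Fin n → ℝ := fun i j => z i j + r i * c j / T with hz'_def
    have hz'alloc : IsAlloc z' := by
      refine ⟨fun i j => ?_, fun i => ?_, fun j => ?_⟩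
      · exact add_nonneg (hz0 i j) (div_nonneg (mul_nonneg (hr0 i) (hc0 j)) hT0)
      · have : ∑ j, r i * c j / T = r i := by
          rw [show (fun j => r i * c j / T) = fun j => (r i / T) * c j by
            funext j; ring]
          rw [← Finset.mul_sum, hTc]
          field_simp
        simp only [hz'_def, Finset.sum_add_distrib, this]
        simp [hr_def]
      · have : ∑ i, r i * c j / T = c j := by
          rw [show (fun i => r i * c j / T) = fun i => (c j / T) * r i by
            funext i; ring]
          rw [← Finset.mul_sum, ← hT_def]
          field_simp
        simp only [hz'_def, Finset.sum_add_distrib, this]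
        simp [hc_def]
    have hle : vA A z ≤ vA A z' := by
      refine Finset.sum_le_sum fun i _ => Finset.sum_le_sum fun j _ => ?_
      have : z i j ≤ z' i j := by
        simp only [hz'_def]
        have := div_nonneg (mul_nonneg (hr0 i) (hc0 j)) hT0
        linarith
      exact mul_le_mul_of_nonneg_left this (hA i j)
    exact hle.trans (hm z' hz'alloc)

lemma noI_zero (i0 : Fin n) : NoI i0 (fun _ _ => 0) := by
  refine ⟨⟨fun _ _ => le_refl _, fun _ => by simp, fun _ => by simp⟩, fun _ => rfl⟩

lemma noI_le_WnoA {A : Fin n → Fin n → ℝ} (hA : ∀ i j, 0 ≤ A i j) {i0 : Fin n}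
    {z : Fin n → Fin n → ℝ} (hz : NoI i0 z) : vA A z ≤ WnoA A i0 := by
  refine le_csSup ⟨∑ i, ∑ j, A i j, ?_⟩ ⟨z, hz, rfl⟩
  rintro v ⟨z', hz', rfl⟩
  exact vA_le_bound hA hz'.1.1 hz'.1.2.1

lemma WnoA_le {A : Fin n → Fin n → ℝ} {i0 : Fin n} {cst : ℝ}
    (h : ∀ z, NoI i0 z → vA A z ≤ cst) : WnoA A i0 ≤ cst := by
  refine csSup_le ⟨vA A (fun _ _ => 0), ⟨_, noI_zero i0, rfl⟩⟩ ?_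
  rintro v ⟨z, hz, rfl⟩
  exact h z hz

lemma WnoA_le_W {A x : Fin n → Fin n → ℝ} (hA : ∀ i j, 0 ≤ A i j) (hx : IsAlloc x)
    (hm : ∀ z, IsAlloc z → vA A z ≤ vA A x) (i0 : Fin n) : WnoA A i0 ≤ vA A x :=
  WnoA_le fun z hz => subDS_le hA hx hm hz.1

end GOaux

namespace GOaux2
variable {n : ℕ}

lemma permMatrix_apply {ι : Type*} [DecidableEq ι] (σ : Equiv.Perm ι) (i j : ι) :
    σ.permMatrix ℝ i j = if σ i = j then 1 else 0 := by
  simp [Equiv.Perm.permMatrix, PEquiv.toMatrix_apply, Equiv.toPEquiv_apply, Option.mem_def,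
    eq_comm]

/-- Row sums of the extracted 0/1 submatrix of a permutation of `Fin n ⊕ Fin n`. -/
lemma Erow (σ : Equiv.Perm (Fin n ⊕ Fin n)) (i : Fin n) :
    ∑ j, (if σ (Sum.inl i) = Sum.inl j then (1:ℝ) else 0) =
      Sum.elim (fun _ => (1:ℝ)) (fun _ => 0) (σ (Sum.inl i)) := by
  rcases h : σ (Sum.inl i) with j0 | k0
  · simp [h, Sum.inl.injEq, Finset.sum_ite_eq]
  · simp [h]

lemma Erow_le (σ : Equiv.Perm (Fin n ⊕ Fin n)) (i : Fin n) :
    ∑ j, (if σ (Sum.inl i) = Sum.inl j then (1:ℝ) else 0) ≤ 1 := by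
  rw [Erow]; rcases h : σ (Sum.inl i) with j0 | k0 <;> simp

lemma Ecol_le (σ : Equiv.Perm (Fin n ⊕ Fin n)) (j : Fin n) :
    ∑ i, (if σ (Sum.inl i) = Sum.inl j then (1:ℝ) else 0) ≤ 1 := by
  have hcond : ∀ i : Fin n, (σ (Sum.inl i) = Sum.inl j) ↔ (Sum.inl i = σ.symm (Sum.inl j)) := by
    intro i; rw [Equiv.eq_symm_apply]
  simp only [hcond]
  rcases h : σ.symm (Sum.inl j) with i0 | k0
  · simp [Sum.inl.injEq, Finset.sum_ite_eq']
  · simp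

end GOaux2

namespace GOaux
open GOaux2

/-- Key decomposition lemma: if `s ≥ 0` has all row and column sums at most 2 and the
`i0`-th row sum at most 1, then its value is at most `W + Wno i0`. -/
lemma decomp {A x : Fin n → Fin n → ℝ} (hA : ∀ i j, 0 ≤ A i j) (hx : IsAlloc x)
    (hm : ∀ z, IsAlloc z → vA A z ≤ vA A x) (i0 : Fin n)
    {s : Fin n → Fin n → ℝ} (hs0 : ∀ i j, 0 ≤ s i j)
    (hrow : ∀ i, ∑ j, s i j ≤ 2) (hcol : ∀ j, ∑ i, s i j ≤ 2)
    (hrow0 : ∑ j, s i0 j ≤ 1) :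
    vA A s ≤ vA A x + WnoA A i0 := by
  classical
  set ι := (Fin n ⊕ Fin n) with hι
  -- the padded doubly stochastic matrix
  set S : Matrix ι ι ℝ := Matrix.of (fun p q =>
    match p, q with
    | Sum.inl i, Sum.inl j => s i j / 2
    | Sum.inl i, Sum.inr j => if i = j then 1 - (∑ j', s i j') / 2 else 0
    | Sum.inr i, Sum.inl j => if i = j then 1 - (∑ i', s i' j) / 2 else 0
    | Sum.inr i, Sum.inr j => s j i / 2) with hS_def
  have hSmem : S ∈ doublyStochastic ℝ ι := by
    rw [mem_doublyStochastic_iff_sum]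
    refine ⟨?_, ?_, ?_⟩
    · rintro (i | i) (j | j)
      · exact div_nonneg (hs0 i j) (by norm_num)
      · show (0:ℝ) ≤ (if i = j then 1 - (∑ j', s i j') / 2 else 0)
        split
        · have := hrow i; linarith
        · exact le_refl 0
      · show (0:ℝ) ≤ (if i = j then 1 - (∑ i', s i' j) / 2 else 0)
        split
        · have := hcol j; linarith
        · exact le_refl 0
      · exact div_nonneg (hs0 j i) (by norm_num)
    · rintro (i | i)
      · rw [Fintype.sum_sum_type]
        have h1 : ∑ j, S (Sum.inl i) (Sum.inl j) = (∑ j, s i j) / 2 := by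
          simp [hS_def, Finset.sum_div]
        have h2 : ∑ j, S (Sum.inl i) (Sum.inr j) = 1 - (∑ j', s i j') / 2 := by
          simp [hS_def, Finset.sum_ite_eq]
        rw [h1, h2]; ring
      · rw [Fintype.sum_sum_type]
        have h1 : ∑ j, S (Sum.inr i) (Sum.inl j) = 1 - (∑ i', s i' i) / 2 := by
          simp [hS_def, Finset.sum_ite_eq]
        have h2 : ∑ j, S (Sum.inr i) (Sum.inr j) = (∑ j, s j i) / 2 := by
          simp [hS_def, Finset.sum_div]
        rw [h1, h2]; ring
    · rintro (j | j)
      · rw [Fintype.sum_sum_type]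
        have h1 : ∑ i, S (Sum.inl i) (Sum.inl j) = (∑ i, s i j) / 2 := by
          simp [hS_def, Finset.sum_div]
        have h2 : ∑ i, S (Sum.inr i) (Sum.inl j) = 1 - (∑ i', s i' j) / 2 := by
          simp [hS_def, Finset.sum_ite_eq']
        rw [h1, h2]; ring
      · rw [Fintype.sum_sum_type]
        have h1 : ∑ i, S (Sum.inl i) (Sum.inr j) = 1 - (∑ j', s j j') / 2 := by
          simp [hS_def, Finset.sum_ite_eq']
        have h2 : ∑ i, S (Sum.inr i) (Sum.inr j) = (∑ i, s j i) / 2 := by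
          simp [hS_def, Finset.sum_div]
        rw [h1, h2]; ring
  obtain ⟨w, hw0, hw1, hw2⟩ := exists_eq_sum_perm_of_mem_doublyStochastic hSmem
  -- the extracted 0/1 sub-permutation matrices
  set E : Equiv.Perm ι → (Fin n → Fin n → ℝ) :=
    fun σ i j => if σ (Sum.inl i) = Sum.inl j then 1 else 0 with hE_def
  have hentry : ∀ i j, s i j = ∑ σ : Equiv.Perm ι, 2 * w σ * E σ i j := by
    intro i j
    have h1 : (∑ σ : Equiv.Perm ι, w σ • σ.permMatrix ℝ) (Sum.inl i) (Sum.inl j)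
        = ∑ σ : Equiv.Perm ι, w σ * E σ i j := by
      rw [Matrix.sum_apply]
      refine Finset.sum_congr rfl fun σ _ => ?_
      rw [Matrix.smul_apply, permMatrix_apply]
      simp [hE_def]
    rw [hw2] at h1
    have h2 : S (Sum.inl i) (Sum.inl j) = s i j / 2 := rfl
    rw [h2] at h1
    have : ∑ σ : Equiv.Perm ι, 2 * w σ * E σ i j
        = 2 * ∑ σ : Equiv.Perm ι, w σ * E σ i j := by
      rw [Finset.mul_sum]; refine Finset.sum_congr rfl fun σ _ => by ring
    rw [this, ← h1]; ring
  have hsubDS : ∀ σ : Equiv.Perm ι, SubDS (E σ) := by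
    intro σ
    refine ⟨fun i j => by simp only [hE_def]; split <;> norm_num,
      fun i => Erow_le σ i, fun j => Ecol_le σ j⟩
  have hWnoW : WnoA A i0 ≤ vA A x := WnoA_le_W hA hx hm i0
  -- per-σ bound
  have hb : ∀ σ : Equiv.Perm ι,
      vA A (E σ) ≤ WnoA A i0 + (∑ j, E σ i0 j) * (vA A x - WnoA A i0) := by
    intro σ
    rcases h : σ (Sum.inl i0) with j0 | k0
    · have hrowE : ∑ j, E σ i0 j = 1 := by
        simp only [hE_def]; rw [Erow, h]; simp
      rw [hrowE, one_mul]
      have := subDS_le hA hx hm (hsubDS σ)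
      linarith
    · have hrowE : ∑ j, E σ i0 j = 0 := by
        simp only [hE_def]; rw [Erow, h]; simp
      rw [hrowE, zero_mul, add_zero]
      refine noI_le_WnoA hA ⟨hsubDS σ, fun j => ?_⟩
      simp only [hE_def]; rw [h]; simp
  -- value of s as a combination
  have hval : vA A s = ∑ σ : Equiv.Perm ι, 2 * w σ * vA A (E σ) := by
    unfold vA
    calc ∑ i, ∑ j, A i j * s i j
        = ∑ i, ∑ j, ∑ σ : Equiv.Perm ι, 2 * w σ * (A i j * E σ i j) := by
          refine Finset.sum_congr rfl fun i _ => Finset.sum_congr rfl fun j _ => ?_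
          rw [hentry i j, Finset.mul_sum]
          refine Finset.sum_congr rfl fun σ _ => by ring
      _ = ∑ i, ∑ σ : Equiv.Perm ι, ∑ j, 2 * w σ * (A i j * E σ i j) :=
          Finset.sum_congr rfl fun i _ => Finset.sum_comm
      _ = ∑ σ : Equiv.Perm ι, ∑ i, ∑ j, 2 * w σ * (A i j * E σ i j) :=
          Finset.sum_comm
      _ = ∑ σ : Equiv.Perm ι, 2 * w σ * ∑ i, ∑ j, A i j * E σ i j := by
          refine Finset.sum_congr rfl fun σ _ => ?_
          rw [Finset.mul_sum]
          refine Finset.sum_congr rfl fun i _ => ?_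
          rw [Finset.mul_sum]
      _ = _ := rfl
  -- row i0 identity
  have hchi : ∑ σ : Equiv.Perm ι, 2 * w σ * (∑ j, E σ i0 j) = ∑ j, s i0 j := by
    rw [show (∑ j, s i0 j) = ∑ j, ∑ σ : Equiv.Perm ι, 2 * w σ * E σ i0 j from
      Finset.sum_congr rfl fun j _ => hentry i0 j]
    rw [Finset.sum_comm]
    refine Finset.sum_congr rfl fun σ _ => ?_
    rw [Finset.mul_sum]
  have hw2sum : ∑ σ : Equiv.Perm ι, 2 * w σ = 2 := by
    rw [← Finset.mul_sum, hw1, mul_one]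
  calc vA A s = ∑ σ : Equiv.Perm ι, 2 * w σ * vA A (E σ) := hval
    _ ≤ ∑ σ : Equiv.Perm ι,
          2 * w σ * (WnoA A i0 + (∑ j, E σ i0 j) * (vA A x - WnoA A i0)) := by
        refine Finset.sum_le_sum fun σ _ => ?_
        refine mul_le_mul_of_nonneg_left (hb σ) ?_
        have := hw0 σ; linarith
    _ = (∑ σ : Equiv.Perm ι, 2 * w σ) * WnoA A i0
          + (∑ σ : Equiv.Perm ι, 2 * w σ * (∑ j, E σ i0 j)) * (vA A x - WnoA A i0) := by
        rw [Finset.sum_mul, Finset.sum_mul, ← Finset.sum_add_distrib]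
        refine Finset.sum_congr rfl fun σ _ => by ring
    _ = 2 * WnoA A i0 + (∑ j, s i0 j) * (vA A x - WnoA A i0) := by rw [hw2sum, hchi]
    _ ≤ 2 * WnoA A i0 + 1 * (vA A x - WnoA A i0) := by
        have h1 : 0 ≤ vA A x - WnoA A i0 := by linarith
        have := mul_le_mul_of_nonneg_right hrow0 h1
        linarith
    _ = vA A x + WnoA A i0 := by ring

end GOaux

namespace GOaux

lemma permAlloc {n : ℕ} (τ : Equiv.Perm (Fin n)) :
    IsAlloc (fun i j => if τ i = j then (1:ℝ) else 0) := by
  refine ⟨fun i j => by dsimp only; split <;> norm_num,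
    fun i => by simp [Finset.sum_ite_eq], fun j => ?_⟩
  have hcond : ∀ i : Fin n, (τ i = j) = (i = τ.symm j) := fun i =>
    propext ⟨fun h => by rw [← h, Equiv.symm_apply_apply],
      fun h => by rw [h, Equiv.apply_symm_apply]⟩
  simp [hcond, Finset.sum_ite_eq']

lemma vA_perm {n : ℕ} (A : Fin n → Fin n → ℝ) (τ : Equiv.Perm (Fin n)) :
    vA A (fun i j => if τ i = j then (1:ℝ) else 0) = ∑ i, A i (τ i) := by
  unfold vA
  refine Finset.sum_congr rfl fun i _ => ?_
  simp [mul_ite, Finset.sum_ite_eq]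

end GOaux

end GOauxSection

/-- at a weighted-welfare-maximizing allocation with positive weights,
the agent `i*` with the greatest excess expenditure `p(λ) · (x_i − ω_i)` receives her
favorite bundle affordable at income `p(λ) · ω_{i*} + α` where
`α = max(p(λ) · (x_{i*} − ω_{i*}), 0)`. -/
theorem greatest_overspender_optimal {n : ℕ} (hn : 0 < n)
    (u ω : Fin n → Fin n → ℝ)
    (hu : ∀ i j, 0 ≤ u i j) (hω0 : ∀ i j, 0 ≤ ω i j)
    (hω1 : ∀ j, ∑ i, ω i j = 1)
    (lam : Fin n → ℝ) (hlam : ∀ i, 0 < lam i)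
    (x : Fin n → Fin n → ℝ) (hx : IsAlloc x)
    (hmax : ∀ y, IsAlloc y →
      ∑ i, lam i * dotp (u i) (y i) ≤ ∑ i, lam i * dotp (u i) (x i))
    (istar : Fin n)
    (histar : ∀ i : Fin n,
      dotp (vcg u lam) (x i) - dotp (vcg u lam) (ω i) ≤
      dotp (vcg u lam) (x istar) - dotp (vcg u lam) (ω istar)) :
    IsGreatest
      {v | ∃ y : Fin n → ℝ, InSimplexLe y ∧
            dotp (vcg u lam) y ≤ dotp (vcg u lam) (ω istar) +
              max (dotp (vcg u lam) (x istar) - dotp (vcg u lam) (ω istar)) 0 ∧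
            v = dotp (u istar) y}
      (dotp (u istar) (x istar)) := by
  classical
  set A : Fin n → Fin n → ℝ := fun i j => lam i * u i j with hA_def
  have hA : ∀ i j, 0 ≤ A i j := fun i j => mul_nonneg (hlam i).le (hu i j)
  have hval_eq : ∀ z : Fin n → Fin n → ℝ,
      (∑ i, lam i * dotp (u i) (z i)) = GOaux.vA A z := by
    intro z; unfold GOaux.vA dotp
    refine Finset.sum_congr rfl fun i _ => ?_
    rw [Finset.mul_sum]
    exact Finset.sum_congr rfl fun j _ => by rw [hA_def]; ring
  have hmaxA : ∀ z, IsAlloc z → GOaux.vA A z ≤ GOaux.vA A x := by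
    intro z hz; rw [← hval_eq, ← hval_eq]; exact hmax z hz
  set W : ℝ := GOaux.vA A x with hW_def
  have himg : ∀ S : Set (Fin n → Fin n → ℝ),
      (fun z => ∑ i, lam i * dotp (u i) (z i)) '' S = GOaux.vA A '' S := fun S =>
    Set.image_congr fun z _ => hval_eq z
  have hWval : Wval u lam = W := by
    unfold Wval; rw [himg]
    exact IsGreatest.csSup_eq ⟨⟨x, hx, rfl⟩, by rintro v ⟨z, hz, rfl⟩; exact hmaxA z hz⟩
  have hrelax_le : ∀ (l : Fin n) z, FeasRelax l z → GOaux.vA A z ≤ Wrelax u lam l := by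
    intro l z hz
    unfold Wrelax; rw [himg]
    refine le_csSup ⟨∑ i, ∑ j, A i j, ?_⟩ ⟨z, hz, rfl⟩
    rintro v ⟨z', hz', rfl⟩
    exact GOaux.vA_le_bound hA hz'.1 hz'.2.1
  have hfeas0 : ∀ l : Fin n, FeasRelax l (fun _ _ => (0:ℝ)) := by
    intro l
    refine ⟨fun _ _ => le_refl _, fun i => by simp, fun j _ => by simp, by simp⟩
  have hrelax_sup : ∀ (l : Fin n) (c : ℝ),
      (∀ z, FeasRelax l z → GOaux.vA A z ≤ c) → Wrelax u lam l ≤ c := by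
    intro l c h
    unfold Wrelax; rw [himg]
    refine csSup_le ⟨_, ⟨_, hfeas0 l, rfl⟩⟩ ?_
    rintro v ⟨z, hz, rfl⟩; exact h z hz
  -- optimal permutation via Birkhoff
  have hxds : (Matrix.of x) ∈ doublyStochastic ℝ (Fin n) :=
    mem_doublyStochastic_iff_sum.2 ⟨hx.1, hx.2.1, hx.2.2⟩
  obtain ⟨wgt, hwgt0, hwgt1, hwgt2⟩ :=
    exists_eq_sum_perm_of_mem_doublyStochastic hxds
  haveI : Nonempty (Equiv.Perm (Fin n)) := ⟨1⟩
  obtain ⟨σ, hσ⟩ := Finite.exists_max (fun τ : Equiv.Perm (Fin n) => ∑ i, A i (τ i))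
  have hpermle : ∀ τ : Equiv.Perm (Fin n), ∑ i, A i (τ i) ≤ W := fun τ => by
    rw [← GOaux.vA_perm A τ]
    exact hmaxA _ (GOaux.permAlloc τ)
  have hxentry : ∀ i j, x i j
      = ∑ τ : Equiv.Perm (Fin n), wgt τ * (if τ i = j then (1:ℝ) else 0) := by
    intro i j
    have h1 : (∑ τ : Equiv.Perm (Fin n), wgt τ • τ.permMatrix ℝ) i j
        = ∑ τ : Equiv.Perm (Fin n), wgt τ * (if τ i = j then (1:ℝ) else 0) := by
      rw [Matrix.sum_apply]
      exact Finset.sum_congr rfl fun τ _ => by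
        rw [Matrix.smul_apply, GOaux2.permMatrix_apply]; rfl
    rw [hwgt2] at h1
    exact h1
  have hxle : W ≤ ∑ i, A i (σ i) := by
    have hWsum : W = ∑ τ : Equiv.Perm (Fin n), wgt τ * ∑ i, A i (τ i) := by
      rw [hW_def]; unfold GOaux.vA
      calc ∑ i, ∑ j, A i j * x i j
          = ∑ i, ∑ j, ∑ τ : Equiv.Perm (Fin n),
              wgt τ * (A i j * (if τ i = j then (1:ℝ) else 0)) := by
            refine Finset.sum_congr rfl fun i _ => Finset.sum_congr rfl fun j _ => ?_
            rw [hxentry i j, Finset.mul_sum]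
            exact Finset.sum_congr rfl fun τ _ => by ring
        _ = ∑ i, ∑ τ : Equiv.Perm (Fin n), ∑ j,
              wgt τ * (A i j * (if τ i = j then (1:ℝ) else 0)) :=
            Finset.sum_congr rfl fun i _ => Finset.sum_comm
        _ = ∑ τ : Equiv.Perm (Fin n), ∑ i, ∑ j,
              wgt τ * (A i j * (if τ i = j then (1:ℝ) else 0)) := Finset.sum_comm
        _ = ∑ τ : Equiv.Perm (Fin n), wgt τ * ∑ i, A i (τ i) := by
            refine Finset.sum_congr rfl fun τ _ => ?_
            rw [Finset.mul_sum]
            refine Finset.sum_congr rfl fun i _ => ?_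
            rw [← Finset.mul_sum]
            congr 1
            simp [mul_ite, Finset.sum_ite_eq]
    rw [hWsum]
    calc ∑ τ : Equiv.Perm (Fin n), wgt τ * ∑ i, A i (τ i)
        ≤ ∑ τ : Equiv.Perm (Fin n), wgt τ * ∑ i, A i (σ i) :=
          Finset.sum_le_sum fun τ _ => mul_le_mul_of_nonneg_left (hσ τ) (hwgt0 τ)
      _ = ∑ i, A i (σ i) := by rw [← Finset.sum_mul, hwgt1, one_mul]
  have hSeq : ∑ i, A i (σ i) = W := le_antisymm (hpermle σ) hxle
  -- KEY3
  have hkey3 : ∀ i : Fin n, Wrelax u lam (σ i) ≤ A i (σ i) + GOaux.WnoA A i := by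
    intro i
    refine hrelax_sup (σ i) _ (fun z hz => ?_)
    obtain ⟨hz0, hzr, hzc, hzl⟩ := hz
    set s : Fin n → Fin n → ℝ :=
      fun k j => z k j + (if k ≠ i ∧ σ k = j then 1 else 0) with hs_def
    have hsplitrow : ∀ k, ∑ j, (if k ≠ i ∧ σ k = j then (1:ℝ) else 0)
        = if k ≠ i then 1 else 0 := by
      intro k
      by_cases hk : k = i
      · simp [hk]
      · simp [hk, Finset.sum_ite_eq]
    have hsplitcol : ∀ j, ∑ k, (if k ≠ i ∧ σ k = j then (1:ℝ) else 0)
        = if σ.symm j ≠ i then 1 else 0 := by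
      intro j
      by_cases hj : σ.symm j = i
      · rw [if_neg (by simpa using hj)]
        refine Finset.sum_eq_zero fun k _ => ?_
        rw [if_neg]
        rintro ⟨h1, h2⟩
        exact h1 (by rw [← hj, ← h2, Equiv.symm_apply_apply])
      · rw [if_pos hj]
        rw [Finset.sum_eq_single (σ.symm j)]
        · rw [if_pos ⟨hj, Equiv.apply_symm_apply σ j⟩]
        · intro k _ hk
          rw [if_neg]
          rintro ⟨h1, h2⟩
          exact hk (by rw [← h2, Equiv.symm_apply_apply])
        · intro h; exact absurd (Finset.mem_univ _) h
    have h0 : ∀ k j, 0 ≤ s k j := by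
      intro k j; rw [hs_def]
      refine add_nonneg (hz0 k j) (by split <;> norm_num)
    have hr : ∀ k, ∑ j, s k j ≤ 2 := by
      intro k
      simp only [hs_def, Finset.sum_add_distrib, hsplitrow]
      have := hzr k
      split <;> linarith
    have hc : ∀ j, ∑ k, s k j ≤ 2 := by
      intro j
      simp only [hs_def, Finset.sum_add_distrib, hsplitcol]
      by_cases hj : j = σ i
      · have h1 : σ.symm j = i := by rw [hj, Equiv.symm_apply_apply]
        rw [if_neg (by simpa using h1)]
        have := hzl
        rw [hj]
        linarith [hzl]
      · have h2 := hzc j hj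
        split <;> linarith
    have hr0 : ∑ j, s i j ≤ 1 := by
      simp only [hs_def, Finset.sum_add_distrib, hsplitrow]
      rw [if_neg (by simp : ¬ (i ≠ i))]
      have := hzr i
      linarith
    have hineq := GOaux.decomp hA hx hmaxA i h0 hr hc hr0
    have hinner : ∀ k, ∑ j, A k j * (if k ≠ i ∧ σ k = j then (1:ℝ) else 0)
        = if k ≠ i then A k (σ k) else 0 := by
      intro k
      by_cases hk : k = i
      · simp [hk]
      · simp [hk, mul_ite, Finset.sum_ite_eq]
    have hvs : GOaux.vA A s = GOaux.vA A z + ((∑ k, A k (σ k)) - A i (σ i)) := by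
      unfold GOaux.vA
      simp only [hs_def]
      have : ∀ k, ∑ j, A k j * (z k j + (if k ≠ i ∧ σ k = j then (1:ℝ) else 0))
          = (∑ j, A k j * z k j) + (if k ≠ i then A k (σ k) else 0) := by
        intro k
        rw [← hinner k, ← Finset.sum_add_distrib]
        exact Finset.sum_congr rfl fun j _ => by ring
      rw [Finset.sum_congr rfl fun k _ => this k, Finset.sum_add_distrib]
      congr 1
      have h3 : ∀ k, (if k ≠ i then A k (σ k) else 0)
          = A k (σ k) - (if k = i then A k (σ k) else 0) := by
        intro k; by_cases hk : k = i <;> simp [hk]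
      rw [Finset.sum_congr rfl fun k _ => h3 k, Finset.sum_sub_distrib]
      congr 1
      simp [Finset.sum_ite_eq']
    rw [hvs] at hineq
    linarith [hineq, hSeq, hW_def]
  -- KEY inequality
  have hkey : ∑ j, Wrelax u lam j ≤ W + ∑ i, GOaux.WnoA A i := by
    have h1 : ∑ i, Wrelax u lam (σ i) ≤ ∑ i, (A i (σ i) + GOaux.WnoA A i) :=
      Finset.sum_le_sum fun i _ => hkey3 i
    rw [Equiv.sum_comp σ (Wrelax u lam), Finset.sum_add_distrib, hSeq] at h1
    exact h1
  -- dual feasibility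
  have hfeas : ∀ i j, A i j + GOaux.WnoA A i ≤ Wrelax u lam j := by
    intro i j
    have h1 : GOaux.WnoA A i ≤ Wrelax u lam j - A i j := by
      refine GOaux.WnoA_le (fun z hz => ?_)
      obtain ⟨⟨hz0, hzr, hzc⟩, hzi⟩ := hz
      set z' : Fin n → Fin n → ℝ :=
        fun k l => z k l + (if k = i ∧ l = j then 1 else 0) with hz'_def
      have hrowsplit : ∀ k, ∑ l, (if k = i ∧ l = j then (1:ℝ) else 0)
          = if k = i then 1 else 0 := by
        intro k; by_cases hk : k = i <;> simp [hk, Finset.sum_ite_eq']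
      have hcolsplit : ∀ l, ∑ k, (if k = i ∧ l = j then (1:ℝ) else 0)
          = if l = j then 1 else 0 := by
        intro l; by_cases hl : l = j <;> simp [hl, Finset.sum_ite_eq']
      have hfz : FeasRelax j z' := by
        refine ⟨fun k l => ?_, fun k => ?_, fun l hl => ?_, ?_⟩
        · rw [hz'_def]
          exact add_nonneg (hz0 k l) (by split <;> norm_num)
        · simp only [hz'_def, Finset.sum_add_distrib, hrowsplit]
          by_cases hk : k = i
          · have hzrow : ∑ l, z k l = 0 := by
              rw [hk]
              exact Finset.sum_eq_zero fun l _ => hzi l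
            rw [if_pos hk, hzrow]
            norm_num
          · have := hzr k
            rw [if_neg hk]
            linarith
        · simp only [hz'_def, Finset.sum_add_distrib, hcolsplit]
          have := hzc l
          rw [if_neg hl]
          linarith
        · have h5 : ∀ k, z' k j = z k j + (if k = i then (1:ℝ) else 0) := by
            intro k
            show z k j + (if k = i ∧ j = j then (1:ℝ) else 0)
              = z k j + (if k = i then (1:ℝ) else 0)
            by_cases hk : k = i <;> simp [hk]
          rw [Finset.sum_congr rfl fun k _ => h5 k, Finset.sum_add_distrib]
          have h6 : ∑ k, (if k = i then (1:ℝ) else 0) = 1 := by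
            simp [Finset.sum_ite_eq']
          rw [h6]
          linarith [hzc j]
      have h2 := hrelax_le j z' hfz
      have h3 : GOaux.vA A z' = GOaux.vA A z + A i j := by
        unfold GOaux.vA
        simp only [hz'_def]
        have : ∀ k, ∑ l, A k l * (z k l + (if k = i ∧ l = j then (1:ℝ) else 0))
            = (∑ l, A k l * z k l) + (if k = i then A i j else 0) := by
          intro k
          have h4 : ∑ l, A k l * (if k = i ∧ l = j then (1:ℝ) else 0)
              = if k = i then A i j else 0 := by
            by_cases hk : k = i <;> simp [hk, mul_ite, Finset.sum_ite_eq']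
          rw [← h4, ← Finset.sum_add_distrib]
          exact Finset.sum_congr rfl fun l _ => by ring
        rw [Finset.sum_congr rfl fun k _ => this k, Finset.sum_add_distrib]
        congr 1
        simp [Finset.sum_ite_eq']
      rw [h3] at h2
      linarith
    linarith
  -- complementary slackness
  set q : Fin n → ℝ := fun i => W - GOaux.WnoA A i with hq_def
  set p : Fin n → ℝ := fun j => Wrelax u lam j - W with hp_def
  have hq0 : ∀ i, 0 ≤ q i := fun i =>
    sub_nonneg.2 (GOaux.WnoA_le_W hA hx hmaxA i)
  have hfeas' : ∀ i j, A i j ≤ q i + p j := by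
    intro i j
    have := hfeas i j
    simp only [hq_def, hp_def]
    linarith
  have hsumqp : (∑ i, q i) + ∑ j, p j ≤ W := by
    simp only [hq_def, hp_def, Finset.sum_sub_distrib]
    have hc1 : ∑ _i : Fin n, W = ∑ _j : Fin n, W := rfl
    linarith [hkey]
  have hD : ∀ i, 0 ≤ q i + (∑ j, p j * x i j) - (∑ j, A i j * x i j) := by
    intro i
    have h1 : ∑ j, A i j * x i j ≤ ∑ j, (q i + p j) * x i j :=
      Finset.sum_le_sum fun j _ => mul_le_mul_of_nonneg_right (hfeas' i j) (hx.1 i j)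
    have h2 : ∑ j, (q i + p j) * x i j = q i * (∑ j, x i j) + ∑ j, p j * x i j := by
      rw [Finset.mul_sum, ← Finset.sum_add_distrib]
      exact Finset.sum_congr rfl fun j _ => by ring
    rw [h2, hx.2.1 i, mul_one] at h1
    linarith
  have hDsum : ∑ i, (q i + (∑ j, p j * x i j) - (∑ j, A i j * x i j)) ≤ 0 := by
    have h1 : ∑ i, ∑ j, p j * x i j = ∑ j, p j := by
      rw [Finset.sum_comm]
      refine Finset.sum_congr rfl fun j _ => ?_
      rw [← Finset.mul_sum, hx.2.2 j, mul_one]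
    have h2 : ∑ i, ∑ j, A i j * x i j = W := by rw [hW_def]; rfl
    rw [Finset.sum_sub_distrib, Finset.sum_add_distrib, h1, h2]
    linarith [hsumqp]
  have hD0 : q istar + (∑ j, p j * x istar j) - (∑ j, A istar j * x istar j) = 0 := by
    have htot : ∑ i, (q i + (∑ j, p j * x i j) - (∑ j, A i j * x i j)) = 0 :=
      le_antisymm hDsum (Finset.sum_nonneg fun i _ => hD i)
    exact (Finset.sum_eq_zero_iff_of_nonneg (fun i _ => hD i)).1 htot istar
      (Finset.mem_univ istar)
  have hCS : ∑ j, A istar j * x istar j = q istar + ∑ j, p j * x istar j := by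
    linarith [hD0]
  -- prices
  have hvcg : ∀ j, vcg u lam j = p j := fun j => by
    simp only [vcg, hp_def, hWval]
  have hdotp : ∀ v : Fin n → ℝ, dotp (vcg u lam) v = ∑ j, p j * v j := by
    intro v; unfold dotp
    exact Finset.sum_congr rfl fun j _ => by rw [hvcg]
  -- nonnegativity of the maximal excess
  have hcolsum : ∀ v : Fin n → Fin n → ℝ, (∀ j, ∑ i, v i j = 1) →
      ∑ i, dotp (vcg u lam) (v i) = ∑ j, p j := by
    intro v hv
    have : ∀ i, dotp (vcg u lam) (v i) = ∑ j, p j * v i j := fun i => hdotp (v i)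
    rw [Finset.sum_congr rfl fun i _ => this i, Finset.sum_comm]
    refine Finset.sum_congr rfl fun j _ => ?_
    rw [← Finset.mul_sum, hv j, mul_one]
  have hsum0 : ∑ i, (dotp (vcg u lam) (x i) - dotp (vcg u lam) (ω i)) = 0 := by
    rw [Finset.sum_sub_distrib, hcolsum x hx.2.2, hcolsum ω hω1, sub_self]
  have hE0 : 0 ≤ dotp (vcg u lam) (x istar) - dotp (vcg u lam) (ω istar) := by
    by_contra hcon
    push_neg at hcon
    have h1 : ∑ i, (dotp (vcg u lam) (x i) - dotp (vcg u lam) (ω i))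
        ≤ ∑ _i : Fin n, (dotp (vcg u lam) (x istar) - dotp (vcg u lam) (ω istar)) :=
      Finset.sum_le_sum fun i _ => histar i
    rw [hsum0, Finset.sum_const, Finset.card_univ, Fintype.card_fin, nsmul_eq_mul] at h1
    have h2 : (n:ℝ) * (dotp (vcg u lam) (x istar) - dotp (vcg u lam) (ω istar)) < 0 :=
      mul_neg_of_pos_of_neg (by exact_mod_cast hn) hcon
    linarith
  have hmaxE : max (dotp (vcg u lam) (x istar) - dotp (vcg u lam) (ω istar)) 0
      = dotp (vcg u lam) (x istar) - dotp (vcg u lam) (ω istar) := max_eq_left hE0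
  constructor
  · refine ⟨x istar, ⟨fun j => hx.1 istar j, le_of_eq (hx.2.1 istar)⟩, ?_, rfl⟩
    rw [hmaxE]
    linarith
  · rintro v ⟨y, ⟨hy0, hy1⟩, hbud, rfl⟩
    rw [hmaxE] at hbud
    have hbud' : ∑ j, p j * y j ≤ ∑ j, p j * x istar j := by
      rw [← hdotp y, ← hdotp (x istar)]
      linarith
    have e1 : lam istar * dotp (u istar) y = ∑ j, A istar j * y j := by
      unfold dotp; rw [Finset.mul_sum]
      exact Finset.sum_congr rfl fun j _ => by rw [hA_def]; ring
    have e2 : lam istar * dotp (u istar) (x istar) = ∑ j, A istar j * x istar j := by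
      unfold dotp; rw [Finset.mul_sum]
      exact Finset.sum_congr rfl fun j _ => by rw [hA_def]; ring
    have hchain : lam istar * dotp (u istar) y ≤ lam istar * dotp (u istar) (x istar) := by
      rw [e1, e2, hCS]
      calc ∑ j, A istar j * y j
          ≤ ∑ j, (q istar + p j) * y j :=
            Finset.sum_le_sum fun j _ =>
              mul_le_mul_of_nonneg_right (hfeas' istar j) (hy0 j)
        _ = q istar * (∑ j, y j) + ∑ j, p j * y j := by
            rw [Finset.mul_sum, ← Finset.sum_add_distrib]
            exact Finset.sum_congr rfl fun j _ => by ring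
        _ ≤ q istar * 1 + ∑ j, p j * x istar j :=
            add_le_add (mul_le_mul_of_nonneg_left hy1 (hq0 istar)) hbud'
        _ = q istar + ∑ j, p j * x istar j := by rw [mul_one]
    exact le_of_mul_le_mul_left hchain (hlam istar)
end

section
/- Let λ ∈ ℝⁿ with λ ≥ 0, let x ∈ M maximize ∑_i λ_i (u_i · y_i) over y ∈ M, and let i be an agent such that λ_i (u_{ij} − u_{iℓ}) > 1 for all goods j, ℓ with u_{ij} > u_{iℓ}. If ∑_j p_j(λ) ≤ 1, then u_i · x_i = max_j u_{ij}. -/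
open Finset

section Aux

variable {n : ℕ}

/-- The "one-hot" row putting all mass on good `c`. -/
def onehot (c : Fin n) : Fin n → ℝ := fun g => if g = c then 1 else 0

/-- The allocation matrix of a permutation. -/
def pfun (σ : Equiv.Perm (Fin n)) : Fin n → Fin n → ℝ := fun k g => if σ k = g then 1 else 0

lemma dotp_onehot (a : Fin n → ℝ) (c : Fin n) : dotp a (onehot c) = a c := by
  simp [dotp, onehot, mul_ite]

lemma dotp_pfun (a : Fin n → ℝ) (σ : Equiv.Perm (Fin n)) (k : Fin n) :
    dotp a (pfun σ k) = a (σ k) := by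
  simp [dotp, pfun, mul_ite]

lemma pfun_nonneg (σ : Equiv.Perm (Fin n)) (k g : Fin n) : 0 ≤ pfun σ k g := by
  unfold pfun; split <;> norm_num

lemma isAlloc_pfun (σ : Equiv.Perm (Fin n)) : IsAlloc (pfun σ) := by
  refine ⟨pfun_nonneg σ, fun k => ?_, fun g => ?_⟩
  · simp [pfun]
  · have : ∀ k : Fin n, pfun σ k g = if k = σ.symm g then (1:ℝ) else 0 := by
      intro k
      unfold pfun
      simp [Equiv.apply_eq_iff_eq_symm_apply]
    simp [this]

lemma pfun_eq_permMatrix (σ : Equiv.Perm (Fin n)) :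
    (σ.permMatrix ℝ : Matrix (Fin n) (Fin n) ℝ) = Matrix.of (pfun σ) := by
  ext k g
  simp [Equiv.Perm.permMatrix, PEquiv.toMatrix_apply, Equiv.toPEquiv_apply, pfun]

end Aux

/-- if the sum of the VCG prices is at most 1 and agent `i`'s weight is
large enough that `λ_i (u_{ij} − u_{iℓ}) > 1` whenever `u_{ij} > u_{iℓ}`, then at any
weighted-welfare-maximizing allocation agent `i` attains her favorite good's utility. -/
theorem small_prices_imply_favorite_good {n : ℕ} (hn : 0 < n)
    (u : Fin n → Fin n → ℝ) (hu : ∀ i j, 0 ≤ u i j)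
    (lam : Fin n → ℝ) (hlam : ∀ i, 0 ≤ lam i)
    (x : Fin n → Fin n → ℝ) (hx : IsAlloc x)
    (hmax : ∀ y, IsAlloc y →
      ∑ i, lam i * dotp (u i) (y i) ≤ ∑ i, lam i * dotp (u i) (x i))
    (i : Fin n)
    (hbig : ∀ j l : Fin n, u i l < u i j → 1 < lam i * (u i j - u i l))
    (hp : ∑ l, vcg u lam l ≤ 1) :
    IsGreatest (Set.range (u i)) (dotp (u i) (x i)) := by
  classical
  set V : (Fin n → Fin n → ℝ) → ℝ := fun y => ∑ k, lam k * dotp (u k) (y k) with hVdef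
  obtain ⟨j0, -, hj0⟩ := Finset.exists_max_image (univ : Finset (Fin n)) (u i)
      ⟨⟨0, hn⟩, mem_univ _⟩
  have hj0' : ∀ j, u i j ≤ u i j0 := fun j => hj0 j (mem_univ j)
  have hrow : ∑ j, x i j = 1 := hx.2.1 i
  have hle : dotp (u i) (x i) ≤ u i j0 := by
    have h1 : dotp (u i) (x i) ≤ ∑ j, u i j0 * x i j :=
      Finset.sum_le_sum fun j _ => mul_le_mul_of_nonneg_right (hj0' j) (hx.1 i j)
    rwa [← Finset.mul_sum, hrow, mul_one] at h1
  -- Boundedness of the relaxed problems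
  have hbd : ∀ l : Fin n, ∀ z ∈ {z : Fin n → Fin n → ℝ | FeasRelax l z},
      (fun y => ∑ k, lam k * dotp (u k) (y k)) z ≤ ∑ k, lam k * ∑ j, u k j := by
    intro l z hz
    refine Finset.sum_le_sum fun k _ => mul_le_mul_of_nonneg_left ?_ (hlam k)
    refine Finset.sum_le_sum fun j _ => ?_
    have h1 : z k j ≤ 1 :=
      le_trans (Finset.single_le_sum (fun g _ => hz.1 k g) (mem_univ j)) (hz.2.1 k)
    calc u k j * z k j ≤ u k j * 1 := mul_le_mul_of_nonneg_left h1 (hu k j)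
      _ = u k j := mul_one _
  have hbdd : ∀ l : Fin n,
      BddAbove ((fun y => ∑ k, lam k * dotp (u k) (y k)) '' {z | FeasRelax l z}) := by
    intro l
    refine ⟨∑ k, lam k * ∑ j, u k j, ?_⟩
    rintro v ⟨z, hz, rfl⟩
    exact hbd l z hz
  have hAllocFeas : ∀ l : Fin n, FeasRelax l x :=
    fun l => ⟨hx.1, fun k => le_of_eq (hx.2.1 k), fun g _ => le_of_eq (hx.2.2 g),
      by rw [hx.2.2 l]; norm_num⟩
  have hWval : Wval u lam = V x := by
    refine IsGreatest.csSup_eq ⟨⟨x, hx, rfl⟩, ?_⟩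
    rintro v ⟨z, hz, rfl⟩
    exact hmax z hz
  have hWle : ∀ l : Fin n, Wval u lam ≤ Wrelax u lam l := by
    intro l
    rw [hWval]
    exact le_csSup (hbdd l) ⟨x, hAllocFeas l, rfl⟩
  have key : dotp (u i) (x i) = u i j0 := by
    by_contra hne
    have hlt : dotp (u i) (x i) < u i j0 := lt_of_le_of_ne hle hne
    -- find a "bad" good in the support of x i
    have hbad : ∃ l, 0 < x i l ∧ u i l < u i j0 := by
      by_contra h
      push_neg at h
      have hdp : dotp (u i) (x i) = u i j0 := by
        have hterm : ∀ j ∈ (univ : Finset (Fin n)), u i j * x i j = u i j0 * x i j := by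
          intro j _
          rcases eq_or_lt_of_le (hx.1 i j) with h0 | h0
          · rw [← h0]; ring
          · rw [le_antisymm (hj0' j) (h j h0)]
        calc dotp (u i) (x i) = ∑ j, u i j0 * x i j := Finset.sum_congr rfl hterm
          _ = u i j0 := by rw [← Finset.mul_sum, hrow, mul_one]
      linarith
    obtain ⟨l, hl0, hll⟩ := hbad
    -- Birkhoff decomposition of x
    have hxd : (Matrix.of x) ∈ doublyStochastic ℝ (Fin n) := by
      rw [mem_doublyStochastic_iff_sum]
      exact ⟨hx.1, hx.2.1, hx.2.2⟩
    obtain ⟨w, hw0, hw1, hw2⟩ := exists_eq_sum_perm_of_mem_doublyStochastic hxd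
    have hentry : ∀ k g, x k g = ∑ σ : Equiv.Perm (Fin n), w σ * pfun σ k g := by
      intro k g
      have h1 := congrFun (congrFun hw2 k) g
      rw [Matrix.sum_apply] at h1
      refine (h1.symm).trans ?_
      refine Finset.sum_congr rfl fun σ _ => ?_
      rw [pfun_eq_permMatrix]
      simp [Matrix.smul_apply]
    -- welfare of x is the weighted average of the welfare of the permutations
    have hdotk : ∀ k, dotp (u k) (x k) = ∑ σ : Equiv.Perm (Fin n), w σ * dotp (u k) (pfun σ k) := by
      intro k
      calc dotp (u k) (x k) = ∑ g, u k g * x k g := rfl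
        _ = ∑ g, ∑ σ : Equiv.Perm (Fin n), u k g * (w σ * pfun σ k g) := by
            refine Finset.sum_congr rfl fun g _ => ?_
            rw [hentry k g, Finset.mul_sum]
        _ = ∑ σ : Equiv.Perm (Fin n), ∑ g, u k g * (w σ * pfun σ k g) := Finset.sum_comm
        _ = ∑ σ : Equiv.Perm (Fin n), w σ * dotp (u k) (pfun σ k) := by
            refine Finset.sum_congr rfl fun σ _ => ?_
            rw [dotp, Finset.mul_sum]
            refine Finset.sum_congr rfl fun g _ => ?_
            ring
    have hVx : V x = ∑ σ : Equiv.Perm (Fin n), w σ * V (pfun σ) := by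
      calc V x = ∑ k, lam k * ∑ σ : Equiv.Perm (Fin n), w σ * dotp (u k) (pfun σ k) := by
            refine Finset.sum_congr rfl fun k _ => ?_
            rw [hdotk k]
        _ = ∑ k, ∑ σ : Equiv.Perm (Fin n), lam k * (w σ * dotp (u k) (pfun σ k)) := by
            refine Finset.sum_congr rfl fun k _ => Finset.mul_sum _ _ _
        _ = ∑ σ : Equiv.Perm (Fin n), ∑ k, lam k * (w σ * dotp (u k) (pfun σ k)) :=
            Finset.sum_comm
        _ = ∑ σ : Equiv.Perm (Fin n), w σ * V (pfun σ) := by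
            refine Finset.sum_congr rfl fun σ _ => ?_
            rw [hVdef, Finset.mul_sum]
            refine Finset.sum_congr rfl fun k _ => ?_
            ring
    have hVle : ∀ σ : Equiv.Perm (Fin n), V (pfun σ) ≤ V x := fun σ => hmax _ (isAlloc_pfun σ)
    -- find an optimal permutation assigning good l to agent i
    have hsum_ne : ∑ σ : Equiv.Perm (Fin n), w σ * pfun σ i l ≠ 0 := by
      rw [← hentry i l]; exact ne_of_gt hl0
    obtain ⟨σ, -, hσne⟩ := Finset.exists_ne_zero_of_sum_ne_zero hsum_ne
    have hwσ : w σ ≠ 0 := fun h => hσne (by rw [h, zero_mul])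
    have hσil : σ i = l := by
      by_contra hc
      exact hσne (by simp [pfun, hc])
    have hVσ : V (pfun σ) = V x := by
      have hzero : ∑ σ' : Equiv.Perm (Fin n), w σ' * (V x - V (pfun σ')) = 0 := by
        have : ∑ σ' : Equiv.Perm (Fin n), w σ' * (V x - V (pfun σ'))
            = (∑ σ' : Equiv.Perm (Fin n), w σ') * V x
              - ∑ σ' : Equiv.Perm (Fin n), w σ' * V (pfun σ') := by
          rw [Finset.sum_mul, ← Finset.sum_sub_distrib]
          refine Finset.sum_congr rfl fun σ' _ => ?_
          ring
        rw [this, hw1, one_mul, ← hVx, sub_self]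
      have hterm := (Finset.sum_eq_zero_iff_of_nonneg
        (fun σ' _ => mul_nonneg (hw0 σ') (sub_nonneg.2 (hVle σ')))).1 hzero σ (mem_univ σ)
      have := mul_eq_zero.1 hterm
      rcases this with h | h
      · exact absurd h hwσ
      · linarith [sub_eq_zero.1 h]
    -- construct the feasible point for the relaxed problem at j0
    set y : Fin n → Fin n → ℝ := fun k => if k = i then onehot j0 else pfun σ k with hy
    have hyi : y i = onehot j0 := by simp [hy]
    have hyk : ∀ k, k ≠ i → y k = pfun σ k := by intro k hk; simp [hy, hk]
    have hyfeas : FeasRelax j0 y := by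
      refine ⟨?_, ?_, ?_, ?_⟩
      · intro k g
        by_cases hk : k = i
        · rw [hk, hyi]; unfold onehot; split_ifs <;> norm_num
        · rw [hyk k hk]; exact pfun_nonneg σ k g
      · intro k
        by_cases hk : k = i
        · rw [hk, hyi]
          simp [onehot]
        · rw [hyk k hk]
          exact le_of_eq ((isAlloc_pfun σ).2.1 k)
      · intro g hg
        have hle' : ∀ k : Fin n, y k g ≤ pfun σ k g := by
          intro k
          by_cases hk : k = i
          · rw [hk, hyi]
            unfold onehot
            rw [if_neg hg]
            exact pfun_nonneg σ i g
          · rw [hyk k hk]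
        calc ∑ k, y k g ≤ ∑ k, pfun σ k g := Finset.sum_le_sum fun k _ => hle' k
          _ = 1 := (isAlloc_pfun σ).2.2 g
      · have hle' : ∀ k : Fin n, y k j0 ≤ pfun σ k j0 + (if k = i then 1 else 0) := by
          intro k
          by_cases hk : k = i
          · rw [hk, hyi]
            have h2 := pfun_nonneg σ i j0
            simp only [onehot, if_pos rfl]
            simp only [↓reduceIte]
            linarith
          · rw [hyk k hk, if_neg hk, add_zero]
        calc ∑ k, y k j0 ≤ ∑ k, (pfun σ k j0 + (if k = i then 1 else 0)) :=
              Finset.sum_le_sum fun k _ => hle' k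
          _ = 1 + 1 := by
              rw [Finset.sum_add_distrib, (isAlloc_pfun σ).2.2 j0, Finset.sum_ite_eq'
                (univ : Finset (Fin n)) i (fun _ => (1:ℝ)), if_pos (mem_univ i)]
          _ = 2 := by norm_num
    have hVy : V y = V x + lam i * (u i j0 - u i l) := by
      have hterm : ∀ k, lam k * dotp (u k) (y k)
          = lam k * dotp (u k) (pfun σ k) + (if k = i then lam i * (u i j0 - u i l) else 0) := by
        intro k
        by_cases hk : k = i
        · rw [hk, hyi, dotp_onehot, dotp_pfun, hσil, if_pos rfl]
          ring
        · rw [hyk k hk, if_neg hk, add_zero]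
      calc V y = ∑ k, (lam k * dotp (u k) (pfun σ k)
            + (if k = i then lam i * (u i j0 - u i l) else 0)) := by
            exact Finset.sum_congr rfl fun k _ => hterm k
        _ = V (pfun σ) + lam i * (u i j0 - u i l) := by
            rw [Finset.sum_add_distrib, Finset.sum_ite_eq' (univ : Finset (Fin n)) i
              (fun _ => lam i * (u i j0 - u i l)), if_pos (mem_univ i)]
        _ = V x + lam i * (u i j0 - u i l) := by rw [hVσ]
    have hVyle : V y ≤ Wrelax u lam j0 := le_csSup (hbdd j0) ⟨y, hyfeas, rfl⟩
    have hgap : 1 < lam i * (u i j0 - u i l) := hbig j0 l hll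
    have hvcg : 1 < vcg u lam j0 := by
      have : Wval u lam + lam i * (u i j0 - u i l) ≤ Wrelax u lam j0 := by
        rw [hWval]
        linarith [hVy ▸ hVyle]
      simp only [vcg]
      linarith
    have hsingle : vcg u lam j0 ≤ ∑ l', vcg u lam l' :=
      Finset.single_le_sum (fun l' _ => sub_nonneg.2 (hWle l')) (mem_univ j0)
    linarith
  exact ⟨⟨j0, key.symm⟩, by rintro v ⟨j, rfl⟩; rw [key]; exact hj0' j⟩
end

section
/- First welfare theorem for lexicographic dividend equilibria: if (x, p, α) is a d-dimensional lexicographic dividend equilibrium for the economy (u, ω) satisfying the strong cheapest bundle property, then x is fractionally Pareto optimal, i.e., there is no y ∈ M with u_i · y_i ≥ u_i · x_i for every agent i and u_i · y_i > u_i · x_i for some agent i. -/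
open Finset

/-- `k_i` (0-based): the first currency in which agent `i` has positive income,
or the last currency `d - 1` if there is none. -/
noncomputable def kIdx {n : ℕ} (d : ℕ) (p α : ℕ → Fin n → ℝ)
    (ω : Fin n → Fin n → ℝ) (i : Fin n) : ℕ :=
  sInf ({k | k < d ∧ 0 < dotp (p k) (ω i) + α k i} ∪ {d - 1})

/-- The budget set `C^α_i(p)`. -/
def BudgetSet {n : ℕ} (d : ℕ) (p α : ℕ → Fin n → ℝ)
    (ω : Fin n → Fin n → ℝ) (i : Fin n) : Set (Fin n → ℝ) :=
  {y | InSimplexLe y ∧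
    ∀ k ≤ kIdx d p α ω i, dotp (p k) y ≤ dotp (p k) (ω i) + α k i}

/-- `(x, p, α)` is a `d`-dimensional lexicographic dividend equilibrium for `(u, ω)`.
Currencies are indexed 0-based by `k < d`. -/
def IsLDE {n : ℕ} (u ω : Fin n → Fin n → ℝ) (d : ℕ)
    (x : Fin n → Fin n → ℝ) (p α : ℕ → Fin n → ℝ) : Prop :=
  IsAlloc x ∧
  (∀ k, k < d → ∀ i, 0 ≤ α k i) ∧
  (∀ (j : Fin n) (k : ℕ), k < d → p k j ≠ 0 → (∀ l < k, p l j = 0) → 0 < p k j) ∧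
  (∀ (i : Fin n) (k : ℕ), k < d →
    α k i = max (dotp (p k) (fun j => x i j - ω i j)) 0) ∧
  (∀ (i : Fin n), ∀ y ∈ BudgetSet d p α ω i, dotp (u i) y ≤ dotp (u i) (x i))

/-- The strong cheapest bundle property. -/
def StrongCB {n : ℕ} (u : Fin n → Fin n → ℝ) (d : ℕ)
    (x : Fin n → Fin n → ℝ) (p : ℕ → Fin n → ℝ) : Prop :=
  ¬ ∃ (i : Fin n) (y : Fin n → ℝ) (k : ℕ),
      InSimplexLe y ∧ dotp (u i) (x i) ≤ dotp (u i) y ∧ k < d ∧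
      (∀ l < k, dotp (p l) y = dotp (p l) (x i)) ∧
      dotp (p k) y < dotp (p k) (x i)

/-- first welfare theorem for LDEs: the allocation of an LDE
satisfying the strong cheapest bundle property is fractionally Pareto optimal. -/
theorem lde_first_welfare {n : ℕ} (hn : 0 < n) (u ω : Fin n → Fin n → ℝ)
    (hu : ∀ i j, 0 ≤ u i j) (hω0 : ∀ i j, 0 ≤ ω i j)
    (hω1 : ∀ j, ∑ i, ω i j = 1)
    (d : ℕ) (hd : 1 ≤ d) (x : Fin n → Fin n → ℝ) (p α : ℕ → Fin n → ℝ)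
    (hLDE : IsLDE u ω d x p α) (hCB : StrongCB u d x p) :
    ¬ ∃ y : Fin n → Fin n → ℝ, IsAlloc y ∧
        (∀ i, dotp (u i) (x i) ≤ dotp (u i) (y i)) ∧
        (∃ i, dotp (u i) (x i) < dotp (u i) (y i)) := by
  rintro ⟨y, ⟨hy0, hyrow, hycol⟩, hyge, i0, hstrict⟩
  obtain ⟨⟨hx0, hxrow, hxcol⟩, hα0, hpos, hαdef, hopt⟩ := hLDE
  -- key: prices of y i equal prices of x i in every currency
  have key : ∀ k, k < d → ∀ i, dotp (p k) (y i) = dotp (p k) (x i) := by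
    intro k
    induction k using Nat.strong_induction_on with
    | _ k ih =>
      intro hk
      have hge : ∀ i ∈ (univ : Finset (Fin n)),
          dotp (p k) (x i) ≤ dotp (p k) (y i) := by
        intro i _
        by_contra hlt
        push_neg at hlt
        exact hCB ⟨i, y i, k, ⟨hy0 i, (hyrow i).le⟩, hyge i, hk,
          fun l hl => ih l hl (hl.trans hk) i, hlt⟩
      have hsx : ∑ i, dotp (p k) (x i) = ∑ j, p k j := by
        simp only [dotp]
        rw [Finset.sum_comm]
        exact Finset.sum_congr rfl fun j _ => by
          rw [← Finset.mul_sum, hxcol j, mul_one]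
      have hsy : ∑ i, dotp (p k) (y i) = ∑ j, p k j := by
        simp only [dotp]
        rw [Finset.sum_comm]
        exact Finset.sum_congr rfl fun j _ => by
          rw [← Finset.mul_sum, hycol j, mul_one]
      intro i
      have := (Finset.sum_eq_sum_iff_of_le hge).mp (by rw [hsx, hsy])
      exact (this i (Finset.mem_univ i)).symm
  -- each y i is in the budget set
  have hbud : ∀ i, y i ∈ BudgetSet d p α ω i := by
    intro i
    refine ⟨⟨hy0 i, (hyrow i).le⟩, fun k hk => ?_⟩
    have hkd : k < d := by
      have h1 : kIdx d p α ω i ≤ d - 1 :=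
        Nat.sInf_le (by simp [Set.mem_union])
      have := hk.trans h1
      omega
    rw [key k hkd i]
    have hsub : dotp (p k) (fun j => x i j - ω i j)
        = dotp (p k) (x i) - dotp (p k) (ω i) := by
      simp [dotp, mul_sub, Finset.sum_sub_distrib]
    have := le_max_left (dotp (p k) (fun j => x i j - ω i j)) 0
    rw [← hαdef i k hkd] at this
    rw [hsub] at this
    linarith
  exact absurd (hopt i0 (y i0) (hbud i0)) (not_le.mpr hstrict)
end
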